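/- If a potential game has a continuous potential function J on a nonempty compact product strategy space Ω = Ω₁ × ⋯ × Ωₙ (each Ωᵢ a compact subset of a metric/topological space), then a Nash equilibrium exists. -/
import Mathlib

theorem stmt_6 (n : ℕ) (Ω : Fin n → Type*)
    [∀ i, TopologicalSpace (Ω i)] [∀ i, CompactSpace (Ω i)] [∀ i, Nonempty (Ω i)]
    (u : Fin n → (∀ i, Ω i) → ℝ) (J : (∀ i, Ω i) → ℝ) (hJ : Continuous J)
    (hpot : ∀ (i : Fin n) (p : ∀ i, Ω i) (x y : Ω i),
      u i (Function.update p i x) - u i (Function.update p i y)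
        = J (Function.update p i x) - J (Function.update p i y)) :
    ∃ p : ∀ i, Ω i, ∀ (i : Fin n) (x : Ω i), u i p ≤ u i (Function.update p i x) := by
  obtain ⟨p, -, hp⟩ := isCompact_univ.exists_isMinOn Set.univ_nonempty hJ.continuousOn
  simp only [isMinOn_iff, Set.mem_univ, forall_true_left] at hp
  refine ⟨p, fun i x => ?_⟩
  have h := hpot i p x (p i)
  rw [Function.update_eq_self] at h
  have := hp (Function.update p i x)
  linarith
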